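/- Let n ≥ 3 and let 𝒫 be the set of n×n complex matrices P with P = P* and P·P = P. There is no function μ : 𝒫 → ℕ such that μ(1) = 1 and μ(P + Q) = μ(P) + μ(Q) whenever P, Q ∈ 𝒫 satisfy P·Q = 0. (This is the Kochen–Specker theorem in the simplicial framework: for a finite-dimensional Hilbert space H with dim H ≥ 3, the map of simplicial sets δ : S¹ → P_H S¹ admits no splitting.) -/

import Mathlib

open Matrix

/-- The set of orthogonal projections: Hermitian idempotent `n × n` complex matrices. -/
def Projs (n : ℕ) : Set (Matrix (Fin n) (Fin n) ℂ) :=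
  {P | P.IsHermitian ∧ P * P = P}

set_option linter.unusedSectionVars false

noncomputable section
open Matrix

def dot3 (u v : Fin 3 → ℝ) : ℝ := u 0 * v 0 + u 1 * v 1 + u 2 * v 2

def cross3 (u v : Fin 3 → ℝ) : Fin 3 → ℝ :=
  ![u 1 * v 2 - u 2 * v 1, u 2 * v 0 - u 0 * v 2, u 0 * v 1 - u 1 * v 0]

lemma dot3_self_pos {u : Fin 3 → ℝ} (hu : u ≠ 0) : 0 < dot3 u u := by
  have h : ¬ (u 0 = 0 ∧ u 1 = 0 ∧ u 2 = 0) := by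
    intro ⟨h0, h1, h2⟩
    apply hu; funext i; fin_cases i <;> assumption
  unfold dot3
  rcases not_and_or.1 h with h0 | h12
  · nlinarith [sq_nonneg (u 1), sq_nonneg (u 2), sq_nonneg (u 0), sq_abs (u 0),
      abs_pos.2 h0]
  · rcases not_and_or.1 h12 with h1 | h2
    · nlinarith [sq_nonneg (u 1), sq_nonneg (u 2), sq_nonneg (u 0), abs_pos.2 h1, sq_abs (u 1)]
    · nlinarith [sq_nonneg (u 1), sq_nonneg (u 2), sq_nonneg (u 0), abs_pos.2 h2, sq_abs (u 2)]

lemma cross3_ne_zero {u v : Fin 3 → ℝ} (hu : u ≠ 0) (hv : v ≠ 0)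
    (huv : dot3 u v = 0) : cross3 u v ≠ 0 := by
  intro h
  have h0 := congrFun h 0
  have h1 := congrFun h 1
  have h2 := congrFun h 2
  simp [cross3] at h0 h1 h2
  have lag : dot3 u u * dot3 v v =
      dot3 u v ^ 2 + ((u 1 * v 2 - u 2 * v 1) ^ 2 + (u 2 * v 0 - u 0 * v 2) ^ 2 +
        (u 0 * v 1 - u 1 * v 0) ^ 2) := by unfold dot3; ring
  have hpos := mul_pos (dot3_self_pos hu) (dot3_self_pos hv)
  rw [lag, huv] at hpos
  nlinarith [hpos]

lemma dot3_cross_left (u v : Fin 3 → ℝ) : dot3 u (cross3 u v) = 0 := by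
  simp [dot3, cross3]; ring

lemma dot3_cross_right (u v : Fin 3 → ℝ) : dot3 v (cross3 u v) = 0 := by
  simp [dot3, cross3]; ring

def s : ℝ := Real.sqrt 2
lemma hss : s * s = 2 := Real.mul_self_sqrt (by norm_num)

lemma ksA1 {a b c : ℕ} (h : a + b + c = 1) (hb : b = 0) (hc : c = 0) : a = 1 := by omega
lemma ksA2 {a b c : ℕ} (h : a + b + c = 1) (hb : a = 0) (hc : c = 0) : b = 1 := by omega
lemma ksA3 {a b c : ℕ} (h : a + b + c = 1) (hb : a = 0) (hc : b = 0) : c = 1 := by omega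
lemma ksB1 {a b c : ℕ} (h : a + b + c = 1) (ha : a = 1) : b = 0 ∧ c = 0 := by omega
lemma ksB2 {a b c : ℕ} (h : a + b + c = 1) (hb : b = 1) : a = 0 ∧ c = 0 := by omega
lemma ksB3 {a b c : ℕ} (h : a + b + c = 1) (hc : c = 1) : a = 0 ∧ b = 0 := by omega
lemma ksP1 {a b : ℕ} (h : a + b ≤ 1) (ha : a = 1) : b = 0 := by omega
lemma ksP2 {a b : ℕ} (h : a + b ≤ 1) (hb : b = 1) : a = 0 := by omega
lemma ksBrA {a b c : ℕ} (h : a + b + c = 1) : a = 0 ∨ a = 1 := by omega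
lemma ksBrB {a b c : ℕ} (h : a + b + c = 1) : b = 0 ∨ b = 1 := by omega
lemma ksBrC {a b c : ℕ} (h : a + b + c = 1) : c = 0 ∨ c = 1 := by omega
lemma ksF0 {a b c : ℕ} (h : a + b + c = 1) (ha : a = 0) (hb : b = 0) (hc : c = 0) : False := by omega
lemma ksF1 {a b c : ℕ} (h : a + b + c = 1) (ha : a = 1) (hb : b = 1) : False := by omega
lemma ksF2 {a b c : ℕ} (h : a + b + c = 1) (ha : a = 1) (hc : c = 1) : False := by omega
lemma ksF3 {a b c : ℕ} (h : a + b + c = 1) (hb : b = 1) (hc : c = 1) : False := by omega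
lemma ksFP {a b : ℕ} (h : a + b ≤ 1) (ha : a = 1) (hb : b = 1) : False := by omega

def v0 : Fin 3 → ℝ := ![0, 0, 1]
def v1 : Fin 3 → ℝ := ![0, s, (-1)]
def v2 : Fin 3 → ℝ := ![0, s, 1]
def v3 : Fin 3 → ℝ := ![0, 1, (-1)]
def v4 : Fin 3 → ℝ := ![0, 1, (-s)]
def v5 : Fin 3 → ℝ := ![0, 1, 0]
def v6 : Fin 3 → ℝ := ![0, 1, s]
def v7 : Fin 3 → ℝ := ![0, 1, 1]
def v8 : Fin 3 → ℝ := ![s, (-1), (-1)]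
def v9 : Fin 3 → ℝ := ![s, (-1), 0]
def v10 : Fin 3 → ℝ := ![s, (-1), 1]
def v11 : Fin 3 → ℝ := ![s, 0, (-1)]
def v12 : Fin 3 → ℝ := ![s, 0, 1]
def v13 : Fin 3 → ℝ := ![s, 1, (-1)]
def v14 : Fin 3 → ℝ := ![s, 1, 0]
def v15 : Fin 3 → ℝ := ![s, 1, 1]
def v16 : Fin 3 → ℝ := ![1, (-1), (-s)]
def v17 : Fin 3 → ℝ := ![1, (-1), 0]
def v18 : Fin 3 → ℝ := ![1, (-1), s]
def v19 : Fin 3 → ℝ := ![1, (-s), (-1)]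
def v20 : Fin 3 → ℝ := ![1, (-s), 0]
def v21 : Fin 3 → ℝ := ![1, (-s), 1]
def v22 : Fin 3 → ℝ := ![1, 0, (-1)]
def v23 : Fin 3 → ℝ := ![1, 0, (-s)]
def v24 : Fin 3 → ℝ := ![1, 0, 0]
def v25 : Fin 3 → ℝ := ![1, 0, s]
def v26 : Fin 3 → ℝ := ![1, 0, 1]
def v27 : Fin 3 → ℝ := ![1, s, (-1)]
def v28 : Fin 3 → ℝ := ![1, s, 0]
def v29 : Fin 3 → ℝ := ![1, s, 1]
def v30 : Fin 3 → ℝ := ![1, 1, (-s)]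
def v31 : Fin 3 → ℝ := ![1, 1, 0]
def v32 : Fin 3 → ℝ := ![1, 1, s]
lemma nz0 : v0 ≠ 0 := by intro h; have := congrFun h 2; simp [v0] at this
lemma nz1 : v1 ≠ 0 := by intro h; have := congrFun h 2; simp [v1] at this
lemma nz2 : v2 ≠ 0 := by intro h; have := congrFun h 2; simp [v2] at this
lemma nz3 : v3 ≠ 0 := by intro h; have := congrFun h 1; simp [v3] at this
lemma nz4 : v4 ≠ 0 := by intro h; have := congrFun h 1; simp [v4] at this
lemma nz5 : v5 ≠ 0 := by intro h; have := congrFun h 1; simp [v5] at this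
lemma nz6 : v6 ≠ 0 := by intro h; have := congrFun h 1; simp [v6] at this
lemma nz7 : v7 ≠ 0 := by intro h; have := congrFun h 1; simp [v7] at this
lemma nz8 : v8 ≠ 0 := by intro h; have := congrFun h 1; simp [v8] at this
lemma nz9 : v9 ≠ 0 := by intro h; have := congrFun h 1; simp [v9] at this
lemma nz10 : v10 ≠ 0 := by intro h; have := congrFun h 1; simp [v10] at this
lemma nz11 : v11 ≠ 0 := by intro h; have := congrFun h 2; simp [v11] at this
lemma nz12 : v12 ≠ 0 := by intro h; have := congrFun h 2; simp [v12] at this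
lemma nz13 : v13 ≠ 0 := by intro h; have := congrFun h 1; simp [v13] at this
lemma nz14 : v14 ≠ 0 := by intro h; have := congrFun h 1; simp [v14] at this
lemma nz15 : v15 ≠ 0 := by intro h; have := congrFun h 1; simp [v15] at this
lemma nz16 : v16 ≠ 0 := by intro h; have := congrFun h 0; simp [v16] at this
lemma nz17 : v17 ≠ 0 := by intro h; have := congrFun h 0; simp [v17] at this
lemma nz18 : v18 ≠ 0 := by intro h; have := congrFun h 0; simp [v18] at this
lemma nz19 : v19 ≠ 0 := by intro h; have := congrFun h 0; simp [v19] at this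
lemma nz20 : v20 ≠ 0 := by intro h; have := congrFun h 0; simp [v20] at this
lemma nz21 : v21 ≠ 0 := by intro h; have := congrFun h 0; simp [v21] at this
lemma nz22 : v22 ≠ 0 := by intro h; have := congrFun h 0; simp [v22] at this
lemma nz23 : v23 ≠ 0 := by intro h; have := congrFun h 0; simp [v23] at this
lemma nz24 : v24 ≠ 0 := by intro h; have := congrFun h 0; simp [v24] at this
lemma nz25 : v25 ≠ 0 := by intro h; have := congrFun h 0; simp [v25] at this
lemma nz26 : v26 ≠ 0 := by intro h; have := congrFun h 0; simp [v26] at this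
lemma nz27 : v27 ≠ 0 := by intro h; have := congrFun h 0; simp [v27] at this
lemma nz28 : v28 ≠ 0 := by intro h; have := congrFun h 0; simp [v28] at this
lemma nz29 : v29 ≠ 0 := by intro h; have := congrFun h 0; simp [v29] at this
lemma nz30 : v30 ≠ 0 := by intro h; have := congrFun h 0; simp [v30] at this
lemma nz31 : v31 ≠ 0 := by intro h; have := congrFun h 0; simp [v31] at this
lemma nz32 : v32 ≠ 0 := by intro h; have := congrFun h 0; simp [v32] at this
lemma o0_5 : dot3 v0 v5 = 0 := by show (0 * 0 + 0 * 1 + 1 * 0 : ℝ) = 0; ring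
lemma o0_9 : dot3 v0 v9 = 0 := by show (0 * s + 0 * (-1) + 1 * 0 : ℝ) = 0; ring
lemma o0_14 : dot3 v0 v14 = 0 := by show (0 * s + 0 * 1 + 1 * 0 : ℝ) = 0; ring
lemma o0_17 : dot3 v0 v17 = 0 := by show (0 * 1 + 0 * (-1) + 1 * 0 : ℝ) = 0; ring
lemma o0_20 : dot3 v0 v20 = 0 := by show (0 * 1 + 0 * (-s) + 1 * 0 : ℝ) = 0; ring
lemma o0_24 : dot3 v0 v24 = 0 := by show (0 * 1 + 0 * 0 + 1 * 0 : ℝ) = 0; ring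
lemma o0_28 : dot3 v0 v28 = 0 := by show (0 * 1 + 0 * s + 1 * 0 : ℝ) = 0; ring
lemma o0_31 : dot3 v0 v31 = 0 := by show (0 * 1 + 0 * 1 + 1 * 0 : ℝ) = 0; ring
lemma o1_6 : dot3 v1 v6 = 0 := by show (0 * 0 + s * 1 + (-1) * s : ℝ) = 0; ring
lemma o1_16 : dot3 v1 v16 = 0 := by show (0 * 1 + s * (-1) + (-1) * (-s) : ℝ) = 0; ring
lemma o1_24 : dot3 v1 v24 = 0 := by show (0 * 1 + s * 0 + (-1) * 0 : ℝ) = 0; ring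
lemma o1_32 : dot3 v1 v32 = 0 := by show (0 * 1 + s * 1 + (-1) * s : ℝ) = 0; ring
lemma o2_4 : dot3 v2 v4 = 0 := by show (0 * 0 + s * 1 + 1 * (-s) : ℝ) = 0; ring
lemma o2_18 : dot3 v2 v18 = 0 := by show (0 * 1 + s * (-1) + 1 * s : ℝ) = 0; ring
lemma o2_24 : dot3 v2 v24 = 0 := by show (0 * 1 + s * 0 + 1 * 0 : ℝ) = 0; ring
lemma o2_30 : dot3 v2 v30 = 0 := by show (0 * 1 + s * 1 + 1 * (-s) : ℝ) = 0; ring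
lemma o3_7 : dot3 v3 v7 = 0 := by show (0 * 0 + 1 * 1 + (-1) * 1 : ℝ) = 0; ring
lemma o3_8 : dot3 v3 v8 = 0 := by show (0 * s + 1 * (-1) + (-1) * (-1) : ℝ) = 0; ring
lemma o3_15 : dot3 v3 v15 = 0 := by show (0 * s + 1 * 1 + (-1) * 1 : ℝ) = 0; ring
lemma o3_24 : dot3 v3 v24 = 0 := by show (0 * 1 + 1 * 0 + (-1) * 0 : ℝ) = 0; ring
lemma o4_19 : dot3 v4 v19 = 0 := by show (0 * 1 + 1 * (-s) + (-s) * (-1) : ℝ) = 0; ring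
lemma o4_24 : dot3 v4 v24 = 0 := by show (0 * 1 + 1 * 0 + (-s) * 0 : ℝ) = 0; ring
lemma o4_29 : dot3 v4 v29 = 0 := by show (0 * 1 + 1 * s + (-s) * 1 : ℝ) = 0; ring
lemma o5_11 : dot3 v5 v11 = 0 := by show (0 * s + 1 * 0 + 0 * (-1) : ℝ) = 0; ring
lemma o5_12 : dot3 v5 v12 = 0 := by show (0 * s + 1 * 0 + 0 * 1 : ℝ) = 0; ring
lemma o5_22 : dot3 v5 v22 = 0 := by show (0 * 1 + 1 * 0 + 0 * (-1) : ℝ) = 0; ring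
lemma o5_23 : dot3 v5 v23 = 0 := by show (0 * 1 + 1 * 0 + 0 * (-s) : ℝ) = 0; ring
lemma o5_24 : dot3 v5 v24 = 0 := by show (0 * 1 + 1 * 0 + 0 * 0 : ℝ) = 0; ring
lemma o5_25 : dot3 v5 v25 = 0 := by show (0 * 1 + 1 * 0 + 0 * s : ℝ) = 0; ring
lemma o5_26 : dot3 v5 v26 = 0 := by show (0 * 1 + 1 * 0 + 0 * 1 : ℝ) = 0; ring
lemma o6_21 : dot3 v6 v21 = 0 := by show (0 * 1 + 1 * (-s) + s * 1 : ℝ) = 0; ring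
lemma o6_24 : dot3 v6 v24 = 0 := by show (0 * 1 + 1 * 0 + s * 0 : ℝ) = 0; ring
lemma o6_27 : dot3 v6 v27 = 0 := by show (0 * 1 + 1 * s + s * (-1) : ℝ) = 0; ring
lemma o7_10 : dot3 v7 v10 = 0 := by show (0 * s + 1 * (-1) + 1 * 1 : ℝ) = 0; ring
lemma o7_13 : dot3 v7 v13 = 0 := by show (0 * s + 1 * 1 + 1 * (-1) : ℝ) = 0; ring
lemma o7_24 : dot3 v7 v24 = 0 := by show (0 * 1 + 1 * 0 + 1 * 0 : ℝ) = 0; ring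
lemma o8_15 : dot3 v8 v15 = 0 := by show (s * s + (-1) * 1 + (-1) * 1 : ℝ) = 0; linear_combination (1 : ℝ) * hss
lemma o8_25 : dot3 v8 v25 = 0 := by show (s * 1 + (-1) * 0 + (-1) * s : ℝ) = 0; ring
lemma o8_28 : dot3 v8 v28 = 0 := by show (s * 1 + (-1) * s + (-1) * 0 : ℝ) = 0; ring
lemma o9_27 : dot3 v9 v27 = 0 := by show (s * 1 + (-1) * s + 0 * (-1) : ℝ) = 0; ring
lemma o9_28 : dot3 v9 v28 = 0 := by show (s * 1 + (-1) * s + 0 * 0 : ℝ) = 0; ring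
lemma o9_29 : dot3 v9 v29 = 0 := by show (s * 1 + (-1) * s + 0 * 1 : ℝ) = 0; ring
lemma o10_13 : dot3 v10 v13 = 0 := by show (s * s + (-1) * 1 + 1 * (-1) : ℝ) = 0; linear_combination (1 : ℝ) * hss
lemma o10_23 : dot3 v10 v23 = 0 := by show (s * 1 + (-1) * 0 + 1 * (-s) : ℝ) = 0; ring
lemma o10_28 : dot3 v10 v28 = 0 := by show (s * 1 + (-1) * s + 1 * 0 : ℝ) = 0; ring
lemma o11_18 : dot3 v11 v18 = 0 := by show (s * 1 + 0 * (-1) + (-1) * s : ℝ) = 0; ring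
lemma o11_25 : dot3 v11 v25 = 0 := by show (s * 1 + 0 * 0 + (-1) * s : ℝ) = 0; ring
lemma o11_32 : dot3 v11 v32 = 0 := by show (s * 1 + 0 * 1 + (-1) * s : ℝ) = 0; ring
lemma o12_16 : dot3 v12 v16 = 0 := by show (s * 1 + 0 * (-1) + 1 * (-s) : ℝ) = 0; ring
lemma o12_23 : dot3 v12 v23 = 0 := by show (s * 1 + 0 * 0 + 1 * (-s) : ℝ) = 0; ring
lemma o12_30 : dot3 v12 v30 = 0 := by show (s * 1 + 0 * 1 + 1 * (-s) : ℝ) = 0; ring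
lemma o13_20 : dot3 v13 v20 = 0 := by show (s * 1 + 1 * (-s) + (-1) * 0 : ℝ) = 0; ring
lemma o13_25 : dot3 v13 v25 = 0 := by show (s * 1 + 1 * 0 + (-1) * s : ℝ) = 0; ring
lemma o14_19 : dot3 v14 v19 = 0 := by show (s * 1 + 1 * (-s) + 0 * (-1) : ℝ) = 0; ring
lemma o14_20 : dot3 v14 v20 = 0 := by show (s * 1 + 1 * (-s) + 0 * 0 : ℝ) = 0; ring
lemma o14_21 : dot3 v14 v21 = 0 := by show (s * 1 + 1 * (-s) + 0 * 1 : ℝ) = 0; ring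
lemma o15_20 : dot3 v15 v20 = 0 := by show (s * 1 + 1 * (-s) + 1 * 0 : ℝ) = 0; ring
lemma o15_23 : dot3 v15 v23 = 0 := by show (s * 1 + 1 * 0 + 1 * (-s) : ℝ) = 0; ring
lemma o16_18 : dot3 v16 v18 = 0 := by show (1 * 1 + (-1) * (-1) + (-s) * s : ℝ) = 0; linear_combination (-1 : ℝ) * hss
lemma o16_31 : dot3 v16 v31 = 0 := by show (1 * 1 + (-1) * 1 + (-s) * 0 : ℝ) = 0; ring
lemma o17_30 : dot3 v17 v30 = 0 := by show (1 * 1 + (-1) * 1 + 0 * (-s) : ℝ) = 0; ring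
lemma o17_31 : dot3 v17 v31 = 0 := by show (1 * 1 + (-1) * 1 + 0 * 0 : ℝ) = 0; ring
lemma o17_32 : dot3 v17 v32 = 0 := by show (1 * 1 + (-1) * 1 + 0 * s : ℝ) = 0; ring
lemma o18_31 : dot3 v18 v31 = 0 := by show (1 * 1 + (-1) * 1 + s * 0 : ℝ) = 0; ring
lemma o19_26 : dot3 v19 v26 = 0 := by show (1 * 1 + (-s) * 0 + (-1) * 1 : ℝ) = 0; ring
lemma o19_27 : dot3 v19 v27 = 0 := by show (1 * 1 + (-s) * s + (-1) * (-1) : ℝ) = 0; linear_combination (-1 : ℝ) * hss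
lemma o21_22 : dot3 v21 v22 = 0 := by show (1 * 1 + (-s) * 0 + 1 * (-1) : ℝ) = 0; ring
lemma o21_29 : dot3 v21 v29 = 0 := by show (1 * 1 + (-s) * s + 1 * 1 : ℝ) = 0; linear_combination (-1 : ℝ) * hss
lemma o22_26 : dot3 v22 v26 = 0 := by show (1 * 1 + 0 * 0 + (-1) * 1 : ℝ) = 0; ring
lemma o22_29 : dot3 v22 v29 = 0 := by show (1 * 1 + 0 * s + (-1) * 1 : ℝ) = 0; ring
lemma o26_27 : dot3 v26 v27 = 0 := by show (1 * 1 + 0 * s + 1 * (-1) : ℝ) = 0; ring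
lemma o30_32 : dot3 v30 v32 = 0 := by show (1 * 1 + 1 * 1 + (-s) * s : ℝ) = 0; linear_combination (-1 : ℝ) * hss

theorem noKScoloring (g : (Fin 3 → ℝ) → ℕ)
    (h3 : ∀ u v w : Fin 3 → ℝ, u ≠ 0 → v ≠ 0 → w ≠ 0 →
      dot3 u v = 0 → dot3 u w = 0 → dot3 v w = 0 → g u + g v + g w = 1) : False := by
  have h2 : ∀ u v : Fin 3 → ℝ, u ≠ 0 → v ≠ 0 → dot3 u v = 0 → g u + g v ≤ 1 := by
    intro u v hu hv huv
    have := h3 u v (cross3 u v) hu hv (cross3_ne_zero hu hv huv) huv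
      (dot3_cross_left u v) (dot3_cross_right u v)
    omega
  have t0_5_24 := h3 v0 v5 v24 nz0 nz5 nz24 o0_5 o0_24 o5_24
  have t0_9_28 := h3 v0 v9 v28 nz0 nz9 nz28 o0_9 o0_28 o9_28
  have t0_14_20 := h3 v0 v14 v20 nz0 nz14 nz20 o0_14 o0_20 o14_20
  have t0_17_31 := h3 v0 v17 v31 nz0 nz17 nz31 o0_17 o0_31 o17_31
  have t1_6_24 := h3 v1 v6 v24 nz1 nz6 nz24 o1_6 o1_24 o6_24
  have t2_4_24 := h3 v2 v4 v24 nz2 nz4 nz24 o2_4 o2_24 o4_24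
  have t3_7_24 := h3 v3 v7 v24 nz3 nz7 nz24 o3_7 o3_24 o7_24
  have t3_8_15 := h3 v3 v8 v15 nz3 nz8 nz15 o3_8 o3_15 o8_15
  have t5_11_25 := h3 v5 v11 v25 nz5 nz11 nz25 o5_11 o5_25 o11_25
  have t5_12_23 := h3 v5 v12 v23 nz5 nz12 nz23 o5_12 o5_23 o12_23
  have t5_22_26 := h3 v5 v22 v26 nz5 nz22 nz26 o5_22 o5_26 o22_26
  have t7_10_13 := h3 v7 v10 v13 nz7 nz10 nz13 o7_10 o7_13 o10_13
  have t16_18_31 := h3 v16 v18 v31 nz16 nz18 nz31 o16_18 o16_31 o18_31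
  have t17_30_32 := h3 v17 v30 v32 nz17 nz30 nz32 o17_30 o17_32 o30_32
  have t19_26_27 := h3 v19 v26 v27 nz19 nz26 nz27 o19_26 o19_27 o26_27
  have t21_22_29 := h3 v21 v22 v29 nz21 nz22 nz29 o21_22 o21_29 o22_29
  have p1_16 := h2 v1 v16 nz1 nz16 o1_16
  have p1_32 := h2 v1 v32 nz1 nz32 o1_32
  have p2_18 := h2 v2 v18 nz2 nz18 o2_18
  have p2_30 := h2 v2 v30 nz2 nz30 o2_30
  have p4_19 := h2 v4 v19 nz4 nz19 o4_19
  have p4_29 := h2 v4 v29 nz4 nz29 o4_29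
  have p6_21 := h2 v6 v21 nz6 nz21 o6_21
  have p6_27 := h2 v6 v27 nz6 nz27 o6_27
  have p8_25 := h2 v8 v25 nz8 nz25 o8_25
  have p8_28 := h2 v8 v28 nz8 nz28 o8_28
  have p9_27 := h2 v9 v27 nz9 nz27 o9_27
  have p9_29 := h2 v9 v29 nz9 nz29 o9_29
  have p10_23 := h2 v10 v23 nz10 nz23 o10_23
  have p10_28 := h2 v10 v28 nz10 nz28 o10_28
  have p11_18 := h2 v11 v18 nz11 nz18 o11_18
  have p11_32 := h2 v11 v32 nz11 nz32 o11_32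
  have p12_16 := h2 v12 v16 nz12 nz16 o12_16
  have p12_30 := h2 v12 v30 nz12 nz30 o12_30
  have p13_20 := h2 v13 v20 nz13 nz20 o13_20
  have p13_25 := h2 v13 v25 nz13 nz25 o13_25
  have p14_19 := h2 v14 v19 nz14 nz19 o14_19
  have p14_21 := h2 v14 v21 nz14 nz21 o14_21
  have p15_20 := h2 v15 v20 nz15 nz20 o15_20
  have p15_23 := h2 v15 v23 nz15 nz23 o15_23
  rcases ksBrA t0_5_24 with h0 | h0
  case inl =>
    rcases ksBrB t0_5_24 with h5 | h5
    case inl =>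
      have h24 : g v24 = 1 := ksA3 t0_5_24 h0 h5
      have h1 : g v1 = 0 := (ksB3 t1_6_24 h24).1
      have h6 : g v6 = 0 := (ksB3 t1_6_24 h24).2
      have h2 : g v2 = 0 := (ksB3 t2_4_24 h24).1
      have h4 : g v4 = 0 := (ksB3 t2_4_24 h24).2
      have h3 : g v3 = 0 := (ksB3 t3_7_24 h24).1
      have h7 : g v7 = 0 := (ksB3 t3_7_24 h24).2
      rcases ksBrB t0_9_28 with h9 | h9
      case inl =>
        have h28 : g v28 = 1 := ksA3 t0_9_28 h0 h9
        have h8 : g v8 = 0 := ksP2 p8_28 h28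
        have h10 : g v10 = 0 := ksP2 p10_28 h28
        have h15 : g v15 = 1 := ksA3 t3_8_15 h3 h8
        have h13 : g v13 = 1 := ksA3 t7_10_13 h7 h10
        have h20 : g v20 = 0 := ksP1 p13_20 h13
        have h25 : g v25 = 0 := ksP1 p13_25 h13
        have h23 : g v23 = 0 := ksP1 p15_23 h15
        have h14 : g v14 = 1 := ksA2 t0_14_20 h0 h20
        have h11 : g v11 = 1 := ksA2 t5_11_25 h5 h25
        have h12 : g v12 = 1 := ksA2 t5_12_23 h5 h23
        have h18 : g v18 = 0 := ksP1 p11_18 h11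
        have h32 : g v32 = 0 := ksP1 p11_32 h11
        have h16 : g v16 = 0 := ksP1 p12_16 h12
        have h30 : g v30 = 0 := ksP1 p12_30 h12
        have h19 : g v19 = 0 := ksP1 p14_19 h14
        have h21 : g v21 = 0 := ksP1 p14_21 h14
        have h31 : g v31 = 1 := ksA3 t16_18_31 h16 h18
        have h17 : g v17 = 1 := ksA1 t17_30_32 h30 h32
        exact ksF3 t0_17_31 h17 h31
      case inr =>
        have h28 : g v28 = 0 := (ksB2 t0_9_28 h9).2
        have h27 : g v27 = 0 := ksP1 p9_27 h9
        have h29 : g v29 = 0 := ksP1 p9_29 h9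
        rcases ksBrB t0_14_20 with h14 | h14
        case inl =>
          have h20 : g v20 = 1 := ksA3 t0_14_20 h0 h14
          have h13 : g v13 = 0 := ksP2 p13_20 h20
          have h15 : g v15 = 0 := ksP2 p15_20 h20
          have h8 : g v8 = 1 := ksA2 t3_8_15 h3 h15
          have h10 : g v10 = 1 := ksA2 t7_10_13 h7 h13
          have h25 : g v25 = 0 := ksP1 p8_25 h8
          have h23 : g v23 = 0 := ksP1 p10_23 h10
          have h11 : g v11 = 1 := ksA2 t5_11_25 h5 h25
          have h12 : g v12 = 1 := ksA2 t5_12_23 h5 h23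
          have h18 : g v18 = 0 := ksP1 p11_18 h11
          have h32 : g v32 = 0 := ksP1 p11_32 h11
          have h16 : g v16 = 0 := ksP1 p12_16 h12
          have h30 : g v30 = 0 := ksP1 p12_30 h12
          have h31 : g v31 = 1 := ksA3 t16_18_31 h16 h18
          have h17 : g v17 = 1 := ksA1 t17_30_32 h30 h32
          exact ksF3 t0_17_31 h17 h31
        case inr =>
          have h20 : g v20 = 0 := (ksB2 t0_14_20 h14).2
          have h19 : g v19 = 0 := ksP1 p14_19 h14
          have h21 : g v21 = 0 := ksP1 p14_21 h14
          have h26 : g v26 = 1 := ksA2 t19_26_27 h19 h27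
          have h22 : g v22 = 1 := ksA2 t21_22_29 h21 h29
          exact ksF3 t5_22_26 h22 h26
    case inr =>
      have h24 : g v24 = 0 := (ksB2 t0_5_24 h5).2
      have h11 : g v11 = 0 := (ksB1 t5_11_25 h5).1
      have h25 : g v25 = 0 := (ksB1 t5_11_25 h5).2
      have h12 : g v12 = 0 := (ksB1 t5_12_23 h5).1
      have h23 : g v23 = 0 := (ksB1 t5_12_23 h5).2
      have h22 : g v22 = 0 := (ksB1 t5_22_26 h5).1
      have h26 : g v26 = 0 := (ksB1 t5_22_26 h5).2
      rcases ksBrB t0_9_28 with h9 | h9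
      case inl =>
        have h28 : g v28 = 1 := ksA3 t0_9_28 h0 h9
        have h8 : g v8 = 0 := ksP2 p8_28 h28
        have h10 : g v10 = 0 := ksP2 p10_28 h28
        rcases ksBrB t0_14_20 with h14 | h14
        case inl =>
          have h20 : g v20 = 1 := ksA3 t0_14_20 h0 h14
          have h13 : g v13 = 0 := ksP2 p13_20 h20
          have h15 : g v15 = 0 := ksP2 p15_20 h20
          have h3 : g v3 = 1 := ksA1 t3_8_15 h8 h15
          have h7 : g v7 = 1 := ksA1 t7_10_13 h10 h13
          exact ksF1 t3_7_24 h3 h7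
        case inr =>
          have h20 : g v20 = 0 := (ksB2 t0_14_20 h14).2
          have h19 : g v19 = 0 := ksP1 p14_19 h14
          have h21 : g v21 = 0 := ksP1 p14_21 h14
          have h27 : g v27 = 1 := ksA3 t19_26_27 h19 h26
          have h29 : g v29 = 1 := ksA3 t21_22_29 h21 h22
          have h4 : g v4 = 0 := ksP2 p4_29 h29
          have h6 : g v6 = 0 := ksP2 p6_27 h27
          have h1 : g v1 = 1 := ksA1 t1_6_24 h6 h24
          have h2 : g v2 = 1 := ksA1 t2_4_24 h4 h24
          have h16 : g v16 = 0 := ksP1 p1_16 h1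
          have h32 : g v32 = 0 := ksP1 p1_32 h1
          have h18 : g v18 = 0 := ksP1 p2_18 h2
          have h30 : g v30 = 0 := ksP1 p2_30 h2
          have h31 : g v31 = 1 := ksA3 t16_18_31 h16 h18
          have h17 : g v17 = 1 := ksA1 t17_30_32 h30 h32
          exact ksF3 t0_17_31 h17 h31
      case inr =>
        have h28 : g v28 = 0 := (ksB2 t0_9_28 h9).2
        have h27 : g v27 = 0 := ksP1 p9_27 h9
        have h29 : g v29 = 0 := ksP1 p9_29 h9
        have h19 : g v19 = 1 := ksA1 t19_26_27 h26 h27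
        have h21 : g v21 = 1 := ksA1 t21_22_29 h22 h29
        have h4 : g v4 = 0 := ksP2 p4_19 h19
        have h6 : g v6 = 0 := ksP2 p6_21 h21
        have h14 : g v14 = 0 := ksP2 p14_19 h19
        have h20 : g v20 = 1 := ksA3 t0_14_20 h0 h14
        have h1 : g v1 = 1 := ksA1 t1_6_24 h6 h24
        have h2 : g v2 = 1 := ksA1 t2_4_24 h4 h24
        have h16 : g v16 = 0 := ksP1 p1_16 h1
        have h32 : g v32 = 0 := ksP1 p1_32 h1
        have h18 : g v18 = 0 := ksP1 p2_18 h2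
        have h30 : g v30 = 0 := ksP1 p2_30 h2
        have h13 : g v13 = 0 := ksP2 p13_20 h20
        have h15 : g v15 = 0 := ksP2 p15_20 h20
        have h31 : g v31 = 1 := ksA3 t16_18_31 h16 h18
        have h17 : g v17 = 1 := ksA1 t17_30_32 h30 h32
        exact ksF3 t0_17_31 h17 h31
  case inr =>
    have h5 : g v5 = 0 := (ksB1 t0_5_24 h0).1
    have h24 : g v24 = 0 := (ksB1 t0_5_24 h0).2
    have h9 : g v9 = 0 := (ksB1 t0_9_28 h0).1
    have h28 : g v28 = 0 := (ksB1 t0_9_28 h0).2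
    have h14 : g v14 = 0 := (ksB1 t0_14_20 h0).1
    have h20 : g v20 = 0 := (ksB1 t0_14_20 h0).2
    have h17 : g v17 = 0 := (ksB1 t0_17_31 h0).1
    have h31 : g v31 = 0 := (ksB1 t0_17_31 h0).2
    rcases ksBrA t1_6_24 with h1 | h1
    case inl =>
      have h6 : g v6 = 1 := ksA2 t1_6_24 h1 h24
      have h21 : g v21 = 0 := ksP1 p6_21 h6
      have h27 : g v27 = 0 := ksP1 p6_27 h6
      rcases ksBrA t2_4_24 with h2 | h2
      case inl =>
        have h4 : g v4 = 1 := ksA2 t2_4_24 h2 h24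
        have h19 : g v19 = 0 := ksP1 p4_19 h4
        have h29 : g v29 = 0 := ksP1 p4_29 h4
        have h26 : g v26 = 1 := ksA2 t19_26_27 h19 h27
        have h22 : g v22 = 1 := ksA2 t21_22_29 h21 h29
        exact ksF3 t5_22_26 h22 h26
      case inr =>
        have h4 : g v4 = 0 := (ksB1 t2_4_24 h2).1
        have h18 : g v18 = 0 := ksP1 p2_18 h2
        have h30 : g v30 = 0 := ksP1 p2_30 h2
        have h16 : g v16 = 1 := ksA1 t16_18_31 h18 h31
        have h32 : g v32 = 1 := ksA3 t17_30_32 h17 h30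
        have h11 : g v11 = 0 := ksP2 p11_32 h32
        have h12 : g v12 = 0 := ksP2 p12_16 h16
        have h25 : g v25 = 1 := ksA3 t5_11_25 h5 h11
        have h23 : g v23 = 1 := ksA3 t5_12_23 h5 h12
        have h8 : g v8 = 0 := ksP2 p8_25 h25
        have h10 : g v10 = 0 := ksP2 p10_23 h23
        have h13 : g v13 = 0 := ksP2 p13_25 h25
        have h15 : g v15 = 0 := ksP2 p15_23 h23
        have h3 : g v3 = 1 := ksA1 t3_8_15 h8 h15
        have h7 : g v7 = 1 := ksA1 t7_10_13 h10 h13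
        exact ksF1 t3_7_24 h3 h7
    case inr =>
      have h6 : g v6 = 0 := (ksB1 t1_6_24 h1).1
      have h16 : g v16 = 0 := ksP1 p1_16 h1
      have h32 : g v32 = 0 := ksP1 p1_32 h1
      have h18 : g v18 = 1 := ksA2 t16_18_31 h16 h31
      have h30 : g v30 = 1 := ksA2 t17_30_32 h17 h32
      have h2 : g v2 = 0 := ksP2 p2_18 h18
      have h11 : g v11 = 0 := ksP2 p11_18 h18
      have h12 : g v12 = 0 := ksP2 p12_30 h30
      have h4 : g v4 = 1 := ksA2 t2_4_24 h2 h24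
      have h25 : g v25 = 1 := ksA3 t5_11_25 h5 h11
      have h23 : g v23 = 1 := ksA3 t5_12_23 h5 h12
      have h19 : g v19 = 0 := ksP1 p4_19 h4
      have h29 : g v29 = 0 := ksP1 p4_29 h4
      have h8 : g v8 = 0 := ksP2 p8_25 h25
      have h10 : g v10 = 0 := ksP2 p10_23 h23
      have h13 : g v13 = 0 := ksP2 p13_25 h25
      have h15 : g v15 = 0 := ksP2 p15_23 h23
      have h3 : g v3 = 1 := ksA1 t3_8_15 h8 h15
      have h7 : g v7 = 1 := ksA1 t7_10_13 h10 h13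
      exact ksF1 t3_7_24 h3 h7


section W
variable {n : ℕ} (e : Fin 3 → Fin n)

def wv (v : Fin 3 → ℝ) : Fin n → ℝ := fun x => ∑ s1 : Fin 3, if x = e s1 then v s1 else 0

variable (he : Function.Injective e)
include he

lemma wv_e (v : Fin 3 → ℝ) (s1 : Fin 3) : wv e v (e s1) = v s1 := by
  simp [wv, he.eq_iff, Finset.sum_ite_eq]

lemma wv_nmem (v : Fin 3 → ℝ) (x : Fin n) (hx : ∀ s1 : Fin 3, x ≠ e s1) :
    wv e v x = 0 := by
  simp [wv, hx]

lemma wv_dot (u v : Fin 3 → ℝ) :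
    ∑ x : Fin n, wv e u x * wv e v x = dot3 u v := by
  unfold wv
  have key : ∀ x : Fin n,
      (∑ s1 : Fin 3, if x = e s1 then u s1 else 0) *
        (∑ s1 : Fin 3, if x = e s1 then v s1 else 0) =
      ∑ s1 : Fin 3, if x = e s1 then u s1 * v s1 else 0 := by
    intro x
    by_cases hx : ∃ s1 : Fin 3, x = e s1
    · obtain ⟨s1, rfl⟩ := hx
      simp [he.eq_iff, Finset.sum_ite_eq]
    · push_neg at hx
      simp [hx]
  rw [Finset.sum_congr rfl (fun x _ => key x), Finset.sum_comm]
  have : ∀ s1 : Fin 3, (∑ x : Fin n, if x = e s1 then u s1 * v s1 else 0) = u s1 * v s1 := by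
    intro s1
    simp [Finset.sum_ite_eq']
  rw [Finset.sum_congr rfl (fun s1 _ => this s1), Fin.sum_univ_three]
  rfl
end W

section PM
variable {n : ℕ} (e : Fin 3 → Fin n)

/-- rank-one projection onto the image of `v` under the coordinate embedding `e`. -/
def PM (v : Fin 3 → ℝ) : Matrix (Fin n) (Fin n) ℂ :=
  of fun x y => ((wv e v x * wv e v y / dot3 v v : ℝ) : ℂ)

lemma PM_herm (v : Fin 3 → ℝ) : (PM e v).IsHermitian := by
  ext x y
  simp [PM, conjTranspose_apply, Complex.conj_ofReal]
  ring_nf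

variable (he : Function.Injective e)
include he

lemma PM_mul (u v : Fin 3 → ℝ) : PM e u * PM e v =
    of fun x y => ((dot3 u v * (wv e u x * wv e v y) / (dot3 u u * dot3 v v) : ℝ) : ℂ) := by
  ext x y
  simp only [PM, mul_apply, of_apply]
  rw [Finset.sum_congr rfl (fun z _ => (Complex.ofReal_mul _ _).symm), ← Complex.ofReal_sum]
  congr 1
  calc ∑ z : Fin n, wv e u x * wv e u z / dot3 u u * (wv e v z * wv e v y / dot3 v v)
      = (wv e u x * wv e v y / (dot3 u u * dot3 v v)) * ∑ z : Fin n, wv e u z * wv e v z := by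
        rw [Finset.mul_sum]; exact Finset.sum_congr rfl (fun z _ => by ring)
    _ = dot3 u v * (wv e u x * wv e v y) / (dot3 u u * dot3 v v) := by
        rw [wv_dot e he]; ring

lemma PM_orth {u v : Fin 3 → ℝ} (huv : dot3 u v = 0) : PM e u * PM e v = 0 := by
  rw [PM_mul e he]
  ext x y
  simp [huv]

lemma PM_idem {v : Fin 3 → ℝ} (hv : v ≠ 0) : PM e v * PM e v = PM e v := by
  rw [PM_mul e he]
  ext x y
  simp only [PM, of_apply, Matrix.zero_apply, Complex.ofReal_inj]
  have hN : dot3 v v ≠ 0 := (dot3_self_pos hv).ne'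
  field_simp

lemma PM_mem {v : Fin 3 → ℝ} (hv : v ≠ 0) :
    PM e v ∈ Projs n :=
  ⟨PM_herm e v, PM_idem e he hv⟩

end PM

section Triple

lemma triple_ortho_sum {u v w : Fin 3 → ℝ} (hu : u ≠ 0) (hv : v ≠ 0) (hw : w ≠ 0)
    (huv : dot3 u v = 0) (huw : dot3 u w = 0) (hvw : dot3 v w = 0) (s1 t : Fin 3) :
    u s1 * u t / dot3 u u + v s1 * v t / dot3 v v + w s1 * w t / dot3 w w =
      if s1 = t then 1 else 0 := by
  have hNu : dot3 u u ≠ 0 := (dot3_self_pos hu).ne'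
  have hNv : dot3 v v ≠ 0 := (dot3_self_pos hv).ne'
  have hNw : dot3 w w ≠ 0 := (dot3_self_pos hw).ne'
  set Q : Matrix (Fin 3) (Fin 3) ℝ := of ![u, v, w] with hQ
  set Dinv : Matrix (Fin 3) (Fin 3) ℝ :=
    diagonal ![(dot3 u u)⁻¹, (dot3 v v)⁻¹, (dot3 w w)⁻¹] with hD
  have h1 : (Dinv * Q) * Qᵀ = 1 := by
    rw [Matrix.mul_assoc]
    have hQQ : Q * Qᵀ = diagonal ![dot3 u u, dot3 v v, dot3 w w] := by
      ext a b
      rw [mul_apply, Fin.sum_univ_three]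
      fin_cases a <;> fin_cases b <;>
        simp [hQ, diagonal, dot3] at * <;> linarith
    rw [hQQ, hD, diagonal_mul_diagonal]
    ext a b
    fin_cases a <;> fin_cases b <;>
      simp [diagonal, one_apply, inv_mul_cancel₀, hNu, hNv, hNw]
  have h2 : Qᵀ * (Dinv * Q) = 1 := mul_eq_one_comm.1 h1
  have h3 := congr_fun (congr_fun h2 s1) t
  rw [mul_apply, Fin.sum_univ_three] at h3
  simp only [transpose_apply, hD, diagonal_mul] at h3
  rw [one_apply] at h3
  calc u s1 * u t / dot3 u u + v s1 * v t / dot3 v v + w s1 * w t / dot3 w w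
      = Q 0 s1 * ((Matrix.diagonal ![(dot3 u u)⁻¹, (dot3 v v)⁻¹, (dot3 w w)⁻¹] 0 0) * Q 0 t)
        + Q 1 s1 * ((Matrix.diagonal ![(dot3 u u)⁻¹, (dot3 v v)⁻¹, (dot3 w w)⁻¹] 1 1) * Q 1 t)
        + Q 2 s1 * ((Matrix.diagonal ![(dot3 u u)⁻¹, (dot3 v v)⁻¹, (dot3 w w)⁻¹] 2 2) * Q 2 t) := by
        simp [hQ, diagonal]; ring
    _ = if s1 = t then 1 else 0 := by
        rw [← h3]
        simp [hD]

end Triple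

section DS
variable {n : ℕ}

def DS (S : Finset (Fin n)) : Matrix (Fin n) (Fin n) ℂ :=
  diagonal fun i => if i ∈ S then 1 else 0

lemma DS_mem (S : Finset (Fin n)) :
    DS S ∈ Projs n := by
  constructor
  · unfold Matrix.IsHermitian DS
    rw [diagonal_conjTranspose]
    have : (star fun i : Fin n => if i ∈ S then (1:ℂ) else 0) =
        fun i : Fin n => if i ∈ S then (1:ℂ) else 0 := by
      funext i; by_cases h : i ∈ S <;> simp [h, Pi.star_apply]
    rw [this]
  · unfold DS
    rw [diagonal_mul_diagonal]
    have : (fun i : Fin n => (if i ∈ S then (1:ℂ) else 0) * (if i ∈ S then (1:ℂ) else 0)) =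
        fun i : Fin n => if i ∈ S then (1:ℂ) else 0 := by
      funext i; by_cases h : i ∈ S <;> simp [h]
    rw [this]

lemma DS_univ : DS (Finset.univ : Finset (Fin n)) = 1 := by
  unfold DS; simp

lemma DS_disjoint_mul {S T : Finset (Fin n)} (h : Disjoint S T) : DS S * DS T = 0 := by
  unfold DS
  rw [diagonal_mul_diagonal]
  ext i j
  by_cases hS : i ∈ S
  · have hT : i ∉ T := Finset.disjoint_left.1 h hS
    simp [hT, diagonal]
  · simp [hS, diagonal]

lemma DS_union {S T : Finset (Fin n)} (h : Disjoint S T) : DS (S ∪ T) = DS S + DS T := by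
  unfold DS
  have hfun : (fun i : Fin n => if i ∈ S ∪ T then (1:ℂ) else 0) =
      fun i : Fin n => (if i ∈ S then (1:ℂ) else 0) + (if i ∈ T then (1:ℂ) else 0) := by
    funext i
    by_cases hS : i ∈ S
    · have hT : i ∉ T := Finset.disjoint_left.1 h hS
      simp [hS, hT]
    · by_cases hT : i ∈ T <;> simp [hS, hT]
  rw [hfun, diagonal_add]

end DS

section Sum3
variable {n : ℕ} (e : Fin 3 → Fin n) (he : Function.Injective e)
include he

lemma PM_add3 {u v w : Fin 3 → ℝ} (hu : u ≠ 0) (hv : v ≠ 0) (hw : w ≠ 0)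
    (huv : dot3 u v = 0) (huw : dot3 u w = 0) (hvw : dot3 v w = 0) :
    PM e u + PM e v + PM e w = DS (Finset.image e Finset.univ) := by
  ext x y
  simp only [Matrix.add_apply, PM, of_apply, DS, diagonal]
  by_cases hx : ∃ s1 : Fin 3, x = e s1
  · obtain ⟨s1, rfl⟩ := hx
    by_cases hy : ∃ t : Fin 3, y = e t
    · obtain ⟨t, rfl⟩ := hy
      rw [wv_e e he, wv_e e he, wv_e e he, wv_e e he, wv_e e he, wv_e e he]
      rw [← Complex.ofReal_add, ← Complex.ofReal_add]
      rw [triple_ortho_sum hu hv hw huv huw hvw s1 t]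
      simp only [of_apply, he.eq_iff]
      by_cases hst : s1 = t <;> simp [hst]
    · push_neg at hy
      have h1 : wv e u y = 0 := wv_nmem e he u y hy
      have h2 : wv e v y = 0 := wv_nmem e he v y hy
      have h3 : wv e w y = 0 := wv_nmem e he w y hy
      have hne : ¬ e s1 = y := fun h => hy s1 h.symm
      simp [h1, h2, h3, of_apply, hne]
  · push_neg at hx
    have h1 : wv e u x = 0 := wv_nmem e he u x hx
    have h2 : wv e v x = 0 := wv_nmem e he v x hx
    have h3 : wv e w x = 0 := wv_nmem e he w x hx
    have hxm : x ∉ Finset.image e Finset.univ := by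
      simp only [Finset.mem_image, Finset.mem_univ, true_and]
      intro ⟨s1, hs1⟩; exact hx s1 hs1.symm
    simp [h1, h2, h3, of_apply, hxm]
end Sum3

lemma dot3_comm (u v : Fin 3 → ℝ) : dot3 u v = dot3 v u := by unfold dot3; ring

lemma inj3 {α : Type*} {x y z : α} (hxy : x ≠ y) (hxz : x ≠ z) (hyz : y ≠ z) :
    Function.Injective ![x, y, z] := by
  intro s t hst
  fin_cases s <;> fin_cases t <;> simp_all <;>
    first | rfl | (exact absurd hst (by tauto)) | (exact absurd hst.symm (by tauto))

/-- **Kochen–Specker theorem** (in the simplicial framework: for `dim H ≥ 3` the map of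
simplicial sets `δ : S¹ → P_H S¹` admits no splitting).  For `n ≥ 3` there is no
finitely-additive normalized `ℕ`-valued measure on the orthogonal projections: no
`μ : 𝒫 → ℕ` with `μ(1) = 1` and `μ(P + Q) = μ(P) + μ(Q)` whenever `P·Q = 0`. -/
theorem kochen_specker (n : ℕ) (hn : 3 ≤ n) :
    ¬ ∃ μ : Projs n → ℕ,
      (∀ I : Projs n, (I : Matrix (Fin n) (Fin n) ℂ) = 1 → μ I = 1) ∧
      (∀ P Q R : Projs n,
        (P : Matrix (Fin n) (Fin n) ℂ) * (Q : Matrix (Fin n) (Fin n) ℂ) = 0 →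
        (R : Matrix (Fin n) (Fin n) ℂ) =
          (P : Matrix (Fin n) (Fin n) ℂ) + (Q : Matrix (Fin n) (Fin n) ℂ) →
        μ R = μ P + μ Q) := by
  classical
  rintro ⟨μ, h1, hadd⟩
  set m : Finset (Fin n) → ℕ := fun S => μ ⟨DS S, DS_mem S⟩ with hm
  have hmU : ∀ S T : Finset (Fin n), Disjoint S T → m (S ∪ T) = m S + m T := by
    intro S T h
    exact hadd ⟨DS S, DS_mem S⟩ ⟨DS T, DS_mem T⟩ ⟨DS (S ∪ T), DS_mem _⟩
      (DS_disjoint_mul h) (DS_union h)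
  have hm1 : m Finset.univ = 1 := h1 ⟨DS Finset.univ, DS_mem _⟩ DS_univ
  have hsum : ∀ S : Finset (Fin n), m S = ∑ j ∈ S, m {j} := by
    intro S
    induction S using Finset.induction_on with
    | empty =>
      have h0 := hmU ∅ ∅ (by simp)
      simp only [Finset.union_empty] at h0
      simp only [Finset.sum_empty]
      omega
    | insert j S' hj ih =>
      rw [Finset.insert_eq, hmU {j} S' (Finset.disjoint_singleton_left.2 hj),
        ← Finset.insert_eq, Finset.sum_insert hj, ih]
  have htot : ∑ j : Fin n, m {j} = 1 := by rw [← hsum]; exact hm1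
  have hex : ∃ k : Fin n, m {k} ≠ 0 := by
    by_contra hno
    push_neg at hno
    rw [Finset.sum_eq_zero (fun j _ => hno j)] at htot
    exact one_ne_zero htot.symm
  obtain ⟨k, hk⟩ := hex
  have hk0 : ∀ j : Fin n, j ≠ k → m {j} = 0 := by
    intro j hjk
    have hsub : ({j, k} : Finset (Fin n)) ⊆ Finset.univ := Finset.subset_univ _
    have hle : ∑ i ∈ ({j, k} : Finset (Fin n)), m {i} ≤ ∑ i : Fin n, m {i} :=
      Finset.sum_le_sum_of_subset hsub
    rw [Finset.sum_pair hjk, htot] at hle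
    omega
  -- build the embedding
  obtain ⟨e, he, hkmem⟩ : ∃ e : Fin 3 → Fin n,
      Function.Injective e ∧ k ∈ Finset.image e Finset.univ := by
    have h0n : (0 : ℕ) < n := by omega
    have h1n : (1 : ℕ) < n := by omega
    have h2n : (2 : ℕ) < n := by omega
    set a : Fin n := ⟨0, h0n⟩
    set b : Fin n := ⟨1, h1n⟩
    set c : Fin n := ⟨2, h2n⟩
    have hab : a ≠ b := by simp [a, b, Fin.ext_iff]
    have hac : a ≠ c := by simp [a, c, Fin.ext_iff]
    have hbc : b ≠ c := by simp [b, c, Fin.ext_iff]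
    by_cases hka : k = a
    · exact ⟨![a, b, c], inj3 hab hac hbc,
        Finset.mem_image.2 ⟨0, Finset.mem_univ _, hka.symm⟩⟩
    · by_cases hkb : k = b
      · exact ⟨![a, b, c], inj3 hab hac hbc,
          Finset.mem_image.2 ⟨1, Finset.mem_univ _, hkb.symm⟩⟩
      · refine ⟨![a, b, k], inj3 hab (fun h => hka h.symm) (fun h => hkb h.symm),
          Finset.mem_image.2 ⟨2, Finset.mem_univ _, rfl⟩⟩
  set T : Finset (Fin n) := Finset.image e Finset.univ with hT
  have hTsplit : m Finset.univ = m T + m Tᶜ := by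
    rw [← hmU T Tᶜ disjoint_compl_right, Finset.union_compl]
  have hTc : m Tᶜ = 0 := by
    rw [hsum]
    apply Finset.sum_eq_zero
    intro j hj
    apply hk0
    intro hjk
    rw [Finset.mem_compl] at hj
    exact hj (hjk ▸ hkmem)
  have hT1 : m T = 1 := by omega
  -- the coloring
  set g : (Fin 3 → ℝ) → ℕ :=
    fun v => if hv : v = 0 then 0 else μ ⟨PM e v, PM_mem e he hv⟩ with hg
  apply noKScoloring g
  intro u v w hu hv hw huv huw hvw
  have hvu : dot3 v u = 0 := (dot3_comm u v) ▸ huv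
  have hmemuv : PM e u + PM e v ∈ Projs n := by
    constructor
    · exact (PM_herm e u).add (PM_herm e v)
    · rw [add_mul, mul_add, mul_add, PM_idem e he hu, PM_idem e he hv,
        PM_orth e he huv, PM_orth e he hvu]
      simp
  have step1 : μ ⟨PM e u + PM e v, hmemuv⟩ =
      μ ⟨PM e u, PM_mem e he hu⟩ + μ ⟨PM e v, PM_mem e he hv⟩ :=
    hadd _ _ _ (PM_orth e he huv) rfl
  have hprod : (PM e u + PM e v) * PM e w = 0 := by
    rw [add_mul, PM_orth e he huw, PM_orth e he hvw, add_zero]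
  have step2 : μ ⟨DS T, DS_mem T⟩ =
      μ ⟨PM e u + PM e v, hmemuv⟩ + μ ⟨PM e w, PM_mem e he hw⟩ :=
    hadd _ _ _ hprod (by exact (PM_add3 e he hu hv hw huv huw hvw).symm)
  have hgu : g u = μ ⟨PM e u, PM_mem e he hu⟩ := dif_neg hu
  have hgv : g v = μ ⟨PM e v, PM_mem e he hv⟩ := dif_neg hv
  have hgw : g w = μ ⟨PM e w, PM_mem e he hw⟩ := dif_neg hw
  rw [hgu, hgv, hgw]
  have : m T = μ ⟨DS T, DS_mem T⟩ := rfl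
  omega

end
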